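/- Under Assumption A, define for x = (x₁,x₂) ∈ [0,∞)² and Borel rectangles B = B₁ × B₂ ⊆ [0,∞)²: T(x, B) = P[ψ(ω·η₁², x₁)·η₂² ∈ B₁, ω·η₁² ∈ B₂, ψ((ω+α·x₁)·η₁², x₁)·η₂² ∈ B₁, and (ω+α·x₁)·η₁² ∈ B₂], where η₁, η₂ are i.i.d. copies of η. Then: (a) for each such rectangle B, the map x ↦ T(x, B) is continuous on [0,∞)²; (b) T(x, B) ≤ P²(x, B) := P[ψ(ψ(x₁,x₂)·η₁², x₁)·η₂² ∈ B₁ and ψ(x₁,x₂)·η₁² ∈ B₂] for all x and all rectangles B; and (c) T(x, [0,∞)×[0,∞)) = 1 for all x. -/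

import Mathlib

open MeasureTheory ProbabilityTheory Set Filter
open scoped ENNReal Topology symmDiff

/-- L¹ continuity of dilations, for a sequence of ratios tending to 1. -/
lemma aux_dil (h : ℝ → ℝ) (hh : Integrable h (volume : Measure ℝ)) (r : ℕ → ℝ)
    (hr : ∀ n, 1/2 ≤ r n ∧ r n ≤ 2) (hrlim : Tendsto r atTop (𝓝 1)) :
    Tendsto (fun n => ∫ t, |h (r n * t) - h t|) atTop (𝓝 0) := by
  rw [Metric.tendsto_atTop]
  intro ε hε
  obtain ⟨g, hgsupp, hgclose, hgcont, hgint⟩ :=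
    hh.exists_hasCompactSupport_integral_sub_le (show (0:ℝ) < ε/4 by linarith)
  -- support bound
  obtain ⟨R, hRpos, hgR⟩ : ∃ R : ℝ, 0 < R ∧ ∀ t : ℝ, R < |t| → g t = 0 := by
    obtain ⟨R, hR⟩ := hgsupp.isCompact.isBounded.subset_closedBall 0
    refine ⟨|R| + 1, by positivity, fun t ht => ?_⟩
    by_contra hgt
    have : t ∈ tsupport g := subset_tsupport g (by simpa using hgt)
    have := hR this
    simp only [Metric.mem_closedBall, Real.dist_eq, sub_zero] at this
    have : |t| ≤ |R| := le_trans this (le_abs_self R)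
    linarith
  -- bound on g
  obtain ⟨C, hC⟩ : ∃ C : ℝ, ∀ t, |g t| ≤ C := by
    obtain ⟨C, hC⟩ := (hgcont.abs.bddAbove_range_of_hasCompactSupport hgsupp.abs)
    exact ⟨C, fun t => hC ⟨t, rfl⟩⟩
  have hC0 : 0 ≤ C := le_trans (abs_nonneg _) (hC 0)
  -- middle term tends to 0
  have hmid : Tendsto (fun n => ∫ t, |g (r n * t) - g t|) atTop (𝓝 0) := by
    have h0 : (0:ℝ) = ∫ t : ℝ, (0:ℝ) := by simp
    rw [h0]
    apply tendsto_integral_of_dominated_convergence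
      (bound := (Icc (-(2*R)) (2*R)).indicator (fun _ => 2*C))
    · intro n
      exact ((hgcont.comp (continuous_const.mul continuous_id)).sub hgcont).abs.aestronglyMeasurable
    · rw [integrable_indicator_iff measurableSet_Icc]
      exact integrableOn_const measure_Icc_lt_top.ne
    · intro n
      refine Eventually.of_forall (fun t => ?_)
      rw [Real.norm_eq_abs, abs_abs]
      by_cases ht : |t| ≤ 2*R
      · have : t ∈ Icc (-(2*R)) (2*R) := by
          rw [mem_Icc]; constructor <;> [linarith [neg_abs_le t]; linarith [le_abs_self t]]
        rw [indicator_of_mem this]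
        calc |g (r n * t) - g t| ≤ |g (r n * t)| + |g t| := abs_sub _ _
          _ ≤ C + C := add_le_add (hC _) (hC _)
          _ = 2*C := by ring
      · push_neg at ht
        have h1 : g t = 0 := hgR t (by linarith)
        have h2 : g (r n * t) = 0 := by
          apply hgR
          rw [abs_mul]
          have h3 : 1/2 ≤ |r n| := le_trans (hr n).1 (le_abs_self _)
          nlinarith [abs_nonneg (r n), abs_nonneg t]
        rw [h1, h2]
        simp only [sub_zero, abs_zero, norm_zero]
        exact Set.indicator_nonneg (fun _ _ => by positivity) t
    · refine Eventually.of_forall (fun t => ?_)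
      have h2 : Tendsto (fun n => r n * t) atTop (𝓝 t) := by simpa using hrlim.mul_const t
      have h3 : Tendsto (fun n => g (r n * t)) atTop (𝓝 (g t)) := (hgcont.tendsto t).comp h2
      have h4 := (h3.sub (tendsto_const_nhds (x := g t))).abs
      simpa using h4
  -- conclude
  obtain ⟨N, hN⟩ := (Metric.tendsto_atTop.mp hmid) (ε/8) (by linarith)
  refine ⟨N, fun n hn => ?_⟩
  have hrn := hr n
  have hrn0 : r n ≠ 0 := by intro h; rw [h] at hrn; linarith [hrn.1]
  have hint1 : Integrable (fun t => h (r n * t)) volume := hh.comp_mul_left' hrn0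
  have hint2 : Integrable (fun t => g (r n * t)) volume := hgint.comp_mul_left' hrn0
  have key : ∫ t, |h (r n * t) - h t| ≤
      (∫ t, |h (r n * t) - g (r n * t)|) + (∫ t, |g (r n * t) - g t|) + ∫ t, |g t - h t| := by
    have hA : Integrable (fun t => |h (r n * t) - g (r n * t)|) volume := (hint1.sub hint2).abs
    have hB : Integrable (fun t => |g (r n * t) - g t|) volume := (hint2.sub hgint).abs
    have hD : Integrable (fun t => |g t - h t|) volume := (hgint.sub hh).abs
    calc ∫ t, |h (r n * t) - h t|
        ≤ ∫ t, (|h (r n * t) - g (r n * t)| + |g (r n * t) - g t| + |g t - h t|) := by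
          apply integral_mono ((hint1.sub hh).abs) ((hA.add hB).add hD)
          intro t
          change |h (r n * t) - h t| ≤
            |h (r n * t) - g (r n * t)| + |g (r n * t) - g t| + |g t - h t|
          have e : h (r n * t) - h t =
              (h (r n * t) - g (r n * t)) + (g (r n * t) - g t) + (g t - h t) := by ring
          rw [e]
          exact le_trans (abs_add_le _ _) (add_le_add_left (abs_add_le _ _) _)
      _ = _ := by
          have hAB : Integrable (fun t => |h (r n * t) - g (r n * t)| + |g (r n * t) - g t|)
            volume := hA.add hB
          rw [integral_add hAB hD, integral_add hA hB]
  have e1 : ∫ t, |h (r n * t) - g (r n * t)| ≤ 2 * (ε/4) := by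
    have : (fun t => |h (r n * t) - g (r n * t)|) = fun t => (fun y => |h y - g y|) (r n * t) := rfl
    rw [this, MeasureTheory.Measure.integral_comp_mul_left (fun y => |h y - g y|) (r n)]
    have hnn : 0 ≤ ∫ y, |h y - g y| := integral_nonneg (fun y => abs_nonneg _)
    have hcl : ∫ y, |h y - g y| ≤ ε/4 := by
      simpa [Real.norm_eq_abs] using hgclose
    have hinv : |(r n)⁻¹| ≤ 2 := by
      rw [abs_inv]
      rw [abs_of_pos (by linarith [hrn.1] : (0:ℝ) < r n)]
      rw [inv_le_comm₀ (by linarith [hrn.1]) (by norm_num)]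
      linarith [hrn.1]
    rw [smul_eq_mul]
    exact mul_le_mul hinv hcl hnn (by norm_num)
  have e3 : ∫ t, |g t - h t| ≤ ε/4 := by
    have : (fun t => |g t - h t|) = fun t => |h t - g t| := by
      funext t; rw [abs_sub_comm]
    rw [this]; simpa [Real.norm_eq_abs] using hgclose
  have e2 : ∫ t, |g (r n * t) - g t| < ε/8 := by
    have := hN n hn
    rw [Real.dist_eq, sub_zero, abs_of_nonneg (integral_nonneg (fun t => abs_nonneg _))] at this
    exact this
  have hnonneg : 0 ≤ ∫ t, |h (r n * t) - h t| := integral_nonneg (fun t => abs_nonneg _)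
  rw [Real.dist_eq, sub_zero, abs_of_nonneg hnonneg]
  calc ∫ t, |h (r n * t) - h t| ≤ _ := key
    _ < 2*(ε/4) + ε/8 + ε/4 := by
        apply add_lt_add_of_lt_of_le _ e3
        exact add_lt_add_of_le_of_lt e1 e2
    _ < ε := by linarith

/-- Volume of the symmetric difference of dilated preimages on a bounded window tends to 0. -/
lemma aux_volB (B : Set ℝ) (hB : MeasurableSet B) (b : ℕ → ℝ) (b₀ : ℝ) (hb₀ : 0 < b₀)
    (hbb : ∀ n, b₀/2 ≤ b n ∧ b n ≤ 2*b₀) (hblim : Tendsto b atTop (𝓝 b₀))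
    (R : ℝ) (hR : 0 ≤ R) :
    Tendsto (fun n => volume ((((b n * ·) ⁻¹' B) ∆ ((b₀ * ·) ⁻¹' B)) ∩ Icc 0 R))
      atTop (𝓝 0) := by
  set r : ℕ → ℝ := fun n => b n / b₀ with hrdef
  have hrb : ∀ n, 1/2 ≤ r n ∧ r n ≤ 2 := by
    intro n
    constructor
    · rw [hrdef, le_div_iff₀ hb₀]; linarith [(hbb n).1]
    · rw [hrdef, div_le_iff₀ hb₀]; linarith [(hbb n).2]
  have hrlim : Tendsto r atTop (𝓝 1) := by
    have := hblim.div_const b₀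
    rwa [div_self hb₀.ne'] at this
  set T₀ : ℝ := b₀ * R with hT₀def
  have hT₀ : 0 ≤ T₀ := mul_nonneg hb₀.le hR
  set D : Set ℝ := B ∩ Icc 0 (2*T₀+1) with hDdef
  have hDmeas : MeasurableSet D := hB.inter measurableSet_Icc
  set h : ℝ → ℝ := D.indicator (fun _ => (1:ℝ)) with hhdef
  have hhint : Integrable h volume := by
    rw [hhdef, integrable_indicator_iff hDmeas]
    exact integrableOn_const ((lt_of_le_of_lt (measure_mono inter_subset_right)
      measure_Icc_lt_top)).ne
  have hI := aux_dil h hhint r hrb hrlim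
  -- per n bound
  have key : ∀ n, volume ((((b n * ·) ⁻¹' B) ∆ ((b₀ * ·) ⁻¹' B)) ∩ Icc 0 R)
      ≤ ENNReal.ofReal |b₀⁻¹| * ENNReal.ofReal (∫ t, |h (r n * t) - h t|) := by
    intro n
    have hrn := hrb n
    have hrn0 : r n ≠ 0 := by intro hc; rw [hc] at hrn; linarith [hrn.1]
    -- set equality via scaling
    have hseteq : (((b n * ·) ⁻¹' B) ∆ ((b₀ * ·) ⁻¹' B)) ∩ Icc 0 R
        = (b₀ * ·) ⁻¹' (((((r n) * ·) ⁻¹' B) ∆ B) ∩ Icc 0 T₀) := by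
      ext u
      have hmul : r n * (b₀ * u) = b n * u := by
        simp only [hrdef]
        rw [← mul_assoc, div_mul_cancel₀ _ hb₀.ne']
      simp only [mem_inter_iff, mem_preimage, Set.mem_symmDiff, mem_Icc, hmul]
      constructor
      · rintro ⟨hs, hu0, huR⟩
        exact ⟨hs, mul_nonneg hb₀.le hu0, by rw [hT₀def]; nlinarith⟩
      · rintro ⟨hs, hu0, huR⟩
        refine ⟨hs, nonneg_of_mul_nonneg_right ?_ hb₀, ?_⟩
        · exact hu0
        · rw [hT₀def] at huR
          exact le_of_mul_le_mul_left huR hb₀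
    rw [hseteq]
    have hS'meas : MeasurableSet ((((r n) * ·) ⁻¹' B) ∆ B ∩ Icc 0 T₀) :=
      ((hB.preimage (measurable_const_mul (r n))).symmDiff hB).inter measurableSet_Icc
    rw [← Measure.map_apply (measurable_const_mul b₀) hS'meas,
      Real.map_volume_mul_left hb₀.ne', Measure.smul_apply, smul_eq_mul]
    apply mul_le_mul_right
    -- volume (S' ∩ Icc 0 T₀) ≤ ofReal ∫ |h (r n t) - h t|
    have hsub : (((r n) * ·) ⁻¹' B) ∆ B ∩ Icc 0 T₀ ⊆ {t | h (r n * t) ≠ h t} := by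
      rintro t ⟨hs, ht0, htT⟩
      have h1 : t ∈ D ↔ t ∈ B := by
        rw [hDdef]
        simp only [mem_inter_iff, mem_Icc]
        exact ⟨fun hx => hx.1, fun hx => ⟨hx, ht0, by linarith⟩⟩
      have h2 : r n * t ∈ D ↔ r n * t ∈ B := by
        rw [hDdef]
        simp only [mem_inter_iff, mem_Icc]
        refine ⟨fun hx => hx.1, fun hx => ⟨hx, ?_, ?_⟩⟩
        · exact mul_nonneg (by linarith [(hrb n).1]) ht0
        · nlinarith [(hrb n).2, (hrb n).1]
      rw [Set.mem_symmDiff] at hs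
      simp only [mem_preimage] at hs
      rw [mem_setOf_eq, hhdef]
      rcases hs with ⟨ha, hb'⟩ | ⟨ha, hb'⟩
      · rw [indicator_of_mem (h2.mpr ha), indicator_of_notMem (fun hc => hb' (h1.mp hc))]
        norm_num
      · rw [indicator_of_notMem (fun hc => hb' (h2.mp hc)), indicator_of_mem (h1.mpr ha)]
        norm_num
    have habs_meas : Measurable fun t => ENNReal.ofReal |h (r n * t) - h t| := by
      have hhm : Measurable h := (measurable_const.indicator hDmeas)
      exact ((hhm.comp (measurable_const_mul (r n))).sub hhm).abs.ennreal_ofReal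
    calc volume ((((r n) * ·) ⁻¹' B) ∆ B ∩ Icc 0 T₀)
        = ∫⁻ t in (((r n) * ·) ⁻¹' B) ∆ B ∩ Icc 0 T₀, 1 := (setLIntegral_one _).symm
      _ ≤ ∫⁻ t in (((r n) * ·) ⁻¹' B) ∆ B ∩ Icc 0 T₀, ENNReal.ofReal |h (r n * t) - h t| := by
          apply setLIntegral_mono habs_meas
          intro t ht
          have hne := hsub ht
          rw [mem_setOf_eq] at hne
          have hvals : ∀ x, h x = 0 ∨ h x = 1 := by
            intro x
            rw [hhdef]
            by_cases hx : x ∈ D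
            · right; rw [indicator_of_mem hx]
            · left; rw [indicator_of_notMem hx]
          rcases hvals (r n * t) with h1 | h1 <;> rcases hvals t with h2 | h2 <;>
            rw [h1, h2] at hne ⊢ <;> simp at hne ⊢
      _ ≤ ∫⁻ t, ENNReal.ofReal |h (r n * t) - h t| := setLIntegral_le_lintegral _ _
      _ = ENNReal.ofReal (∫ t, |h (r n * t) - h t|) := by
          have hintn : Integrable (fun t => |h (r n * t) - h t|) volume :=
            ((hhint.comp_mul_left' hrn0).sub hhint).abs
          rw [ofReal_integral_eq_lintegral_ofReal hintn
            (Eventually.of_forall (fun t => abs_nonneg _))]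
  -- squeeze
  have hup : Tendsto (fun n => ENNReal.ofReal |b₀⁻¹| * ENNReal.ofReal (∫ t, |h (r n * t) - h t|))
      atTop (𝓝 0) := by
    have h1 : Tendsto (fun n => ENNReal.ofReal (∫ t, |h (r n * t) - h t|)) atTop (𝓝 0) := by
      have := (ENNReal.continuous_ofReal.tendsto 0).comp hI
      simpa [Function.comp_def] using this
    have := ENNReal.Tendsto.const_mul (a := ENNReal.ofReal |b₀⁻¹|) h1
      (Or.inr ENNReal.ofReal_ne_top)
    simpa using this
  exact tendsto_of_tendsto_of_tendsto_of_le_of_le tendsto_const_nhds hup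
    (fun n => zero_le) key

/-- For a finite measure with density w.r.t. Lebesgue on `[0,∞)`, the measure of the
symmetric difference of dilated preimages tends to zero. -/
lemma aux_L1 (f : ℝ → ℝ≥0∞) (hf : Measurable f)
    (hfin : ((volume.restrict (Ici (0:ℝ))).withDensity f) univ ≠ ∞)
    (B : Set ℝ) (hB : MeasurableSet B) (b : ℕ → ℝ) (b₀ : ℝ) (hb₀ : 0 < b₀)
    (hblim : Tendsto b atTop (𝓝 b₀)) :
    Tendsto (fun n => ((volume.restrict (Ici (0:ℝ))).withDensity f)
      (((b n * ·) ⁻¹' B) ∆ ((b₀ * ·) ⁻¹' B))) atTop (𝓝 0) := by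
  set μ : Measure ℝ := (volume.restrict (Ici (0:ℝ))).withDensity f with hμdef
  haveI : IsFiniteMeasure μ := ⟨lt_top_iff_ne_top.2 hfin⟩
  -- clamp the sequence
  set b' : ℕ → ℝ := fun n => max (b₀/2) (min (2*b₀) (b n)) with hb'def
  have hb'b : ∀ n, b₀/2 ≤ b' n ∧ b' n ≤ 2*b₀ := by
    intro n
    refine ⟨le_max_left _ _, max_le (by linarith) (min_le_left _ _)⟩
  have hb'lim : Tendsto b' atTop (𝓝 b₀) := by
    have h1 : Tendsto (fun n => min (2*b₀) (b n)) atTop (𝓝 (min (2*b₀) b₀)) :=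
      tendsto_const_nhds.min hblim
    have h2 : Tendsto b' atTop (𝓝 (max (b₀/2) (min (2*b₀) b₀))) :=
      tendsto_const_nhds.max h1
    rwa [min_eq_right (by linarith), max_eq_right (by linarith)] at h2
  have hb'ev : ∀ᶠ n in atTop, b' n = b n := by
    have h1 : ∀ᶠ n in atTop, b n ∈ Ioo (b₀/2) (2*b₀) :=
      hblim.eventually (Ioo_mem_nhds (by linarith) (by linarith))
    filter_upwards [h1] with n hn
    rw [hb'def]
    simp only
    rw [min_eq_right hn.2.le, max_eq_right hn.1.le]
  -- suffices for the clamped sequence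
  suffices H : Tendsto (fun n => μ (((b' n * ·) ⁻¹' B) ∆ ((b₀ * ·) ⁻¹' B))) atTop (𝓝 0) by
    apply Tendsto.congr' _ H
    filter_upwards [hb'ev] with n hn
    rw [hn]
  rw [ENNReal.tendsto_atTop_zero]
  intro ε hε
  -- total mass is a finite lintegral
  have hμuniv : μ univ = ∫⁻ x, f x ∂(volume.restrict (Ici (0:ℝ))) := by
    rw [hμdef, withDensity_apply f MeasurableSet.univ, Measure.restrict_univ]
  -- the set where f = ∞ is null
  have htop0 : μ {x | f x = ∞} = 0 := by
    have hae : ∀ᵐ x ∂(volume.restrict (Ici (0:ℝ))), f x < ∞ :=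
      ae_lt_top hf (by rw [← hμuniv]; exact hfin)
    have h0 : (volume.restrict (Ici (0:ℝ))) {x | f x = ∞} = 0 := by
      have := hae
      rw [ae_iff] at this
      convert this using 2
      ext x
      simp [lt_top_iff_ne_top]
    rw [hμdef, withDensity_apply f (show MeasurableSet {x | f x = ∞} from
      hf (measurableSet_singleton ∞))]
    exact setLIntegral_measure_zero _ _ h0
  -- choose the height cutoff
  have hMtend : Tendsto (fun m : ℕ => μ {x : ℝ | (m:ℝ≥0∞) < f x}) atTop (𝓝 0) := by
    have hmono : Antitone (fun m : ℕ => {x : ℝ | (m:ℝ≥0∞) < f x}) := by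
      intro m m' hmm x hx
      simp only [mem_setOf_eq] at hx ⊢
      exact lt_of_le_of_lt (by exact_mod_cast hmm : (m:ℝ≥0∞) ≤ (m':ℝ≥0∞)) hx
    have h := tendsto_measure_iInter_atTop (μ := μ)
      (s := fun m : ℕ => {x : ℝ | (m:ℝ≥0∞) < f x})
      (fun m => (hf measurableSet_Ioi).nullMeasurableSet) hmono ⟨0, measure_ne_top μ _⟩
    have hInter : ⋂ m : ℕ, {x : ℝ | (m:ℝ≥0∞) < f x} = {x | f x = ∞} := by
      ext x
      simp only [mem_iInter, mem_setOf_eq]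
      constructor
      · intro hx
        by_contra hne
        obtain ⟨m, hm⟩ := ENNReal.exists_nat_gt hne
        exact absurd (hx m) (not_lt.2 hm.le)
      · intro hx m
        rw [hx]
        exact ENNReal.natCast_lt_top m
    rw [hInter, htop0] at h
    exact h
  obtain ⟨m₂, hm₂⟩ := ENNReal.tendsto_atTop_zero.mp hMtend (ε/2/2)
    (ENNReal.div_pos (ENNReal.div_pos hε.ne' (by norm_num)).ne' (by norm_num))
  have hm₂' : μ {x : ℝ | (m₂:ℝ≥0∞) < f x} ≤ ε/2/2 := hm₂ m₂ le_rfl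
  -- choose the tail cutoff
  have hRtend : Tendsto (fun m : ℕ => μ (Ioi (m:ℝ))) atTop (𝓝 0) := by
    have hmono : Antitone (fun m : ℕ => Ioi (m:ℝ)) := by
      intro m m' hmm
      exact Ioi_subset_Ioi (by exact_mod_cast hmm)
    have h := tendsto_measure_iInter_atTop (μ := μ)
      (fun m => measurableSet_Ioi.nullMeasurableSet) hmono ⟨0, measure_ne_top μ _⟩
    have hInter : ⋂ m : ℕ, Ioi (m:ℝ) = ∅ := by
      ext x
      simp only [mem_iInter, mem_Ioi, mem_empty_iff_false, iff_false, not_forall, not_lt]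
      obtain ⟨m, hm⟩ := exists_nat_gt x
      exact ⟨m, hm.le⟩
    rw [hInter, measure_empty] at h
    exact h
  obtain ⟨m₁, hm₁⟩ := ENNReal.tendsto_atTop_zero.mp hRtend (ε/2/2)
    (ENNReal.div_pos (ENNReal.div_pos hε.ne' (by norm_num)).ne' (by norm_num))
  have hm₁' : μ (Ioi ((m₁:ℕ):ℝ)) ≤ ε/2/2 := hm₁ m₁ le_rfl
  set R : ℝ := (m₁ : ℝ) with hRdef
  have hR0 : (0:ℝ) ≤ R := Nat.cast_nonneg _
  -- step B: window volumes tend to 0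
  have hvol := aux_volB B hB b' b₀ hb₀ hb'b hb'lim R hR0
  have hvol' : Tendsto (fun n => (m₂ : ℝ≥0∞) *
      volume ((((b' n * ·) ⁻¹' B) ∆ ((b₀ * ·) ⁻¹' B)) ∩ Icc 0 R)) atTop (𝓝 0) := by
    have := ENNReal.Tendsto.const_mul (a := (m₂ : ℝ≥0∞)) hvol
      (Or.inr (ENNReal.natCast_ne_top m₂))
    simpa using this
  obtain ⟨N, hN⟩ := ENNReal.tendsto_atTop_zero.mp hvol' (ε/2)
    (ENNReal.div_pos hε.ne' (by norm_num))
  refine ⟨N, fun n hn => ?_⟩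
  set S : Set ℝ := ((b' n * ·) ⁻¹' B) ∆ ((b₀ * ·) ⁻¹' B) with hSdef
  have hSmeas : MeasurableSet S :=
    (hB.preimage (measurable_const_mul (b' n))).symmDiff (hB.preimage (measurable_const_mul b₀))
  -- decomposition
  have hdecomp : S ⊆ (S ∩ Icc 0 R ∩ {x | f x ≤ (m₂:ℝ≥0∞)}) ∪ Ioi R ∪ {x : ℝ | (m₂:ℝ≥0∞) < f x}
      ∪ Iio 0 := by
    intro x hx
    by_cases h0 : 0 ≤ x
    · by_cases hR : x ≤ R
      · by_cases hfm : f x ≤ (m₂:ℝ≥0∞)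
        · exact Or.inl (Or.inl (Or.inl ⟨⟨hx, h0, hR⟩, hfm⟩))
        · exact Or.inl (Or.inr (not_le.1 hfm))
      · exact Or.inl (Or.inl (Or.inr (not_le.1 hR)))
    · exact Or.inr (not_le.1 h0)
  have hIio : μ (Iio (0:ℝ)) = 0 := by
    rw [hμdef, withDensity_apply f measurableSet_Iio]
    apply setLIntegral_measure_zero
    rw [Measure.restrict_apply measurableSet_Iio]
    have : Iio (0:ℝ) ∩ Ici 0 = ∅ := by
      ext x; simp only [mem_inter_iff, mem_Iio, mem_Ici, mem_empty_iff_false, iff_false, not_and,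
        not_le]
      exact fun h => h
    rw [this, measure_empty]
  have hmain : μ (S ∩ Icc 0 R ∩ {x | f x ≤ (m₂:ℝ≥0∞)}) ≤ (m₂:ℝ≥0∞) * volume (S ∩ Icc 0 R) := by
    have hGmeas : MeasurableSet (S ∩ Icc 0 R ∩ {x | f x ≤ (m₂:ℝ≥0∞)}) :=
      (hSmeas.inter measurableSet_Icc).inter (hf measurableSet_Iic)
    rw [hμdef, withDensity_apply f hGmeas]
    calc ∫⁻ x in S ∩ Icc 0 R ∩ {x | f x ≤ (m₂:ℝ≥0∞)}, f x ∂(volume.restrict (Ici (0:ℝ)))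
        ≤ ∫⁻ _ in S ∩ Icc 0 R ∩ {x | f x ≤ (m₂:ℝ≥0∞)}, (m₂:ℝ≥0∞) ∂(volume.restrict (Ici (0:ℝ))) :=
          setLIntegral_mono measurable_const (fun x hx => hx.2)
      _ = (m₂:ℝ≥0∞) * (volume.restrict (Ici (0:ℝ))) (S ∩ Icc 0 R ∩ {x | f x ≤ (m₂:ℝ≥0∞)}) := by
          rw [setLIntegral_const]
      _ ≤ (m₂:ℝ≥0∞) * volume (S ∩ Icc 0 R) := by
          apply mul_le_mul_right
          rw [Measure.restrict_apply hGmeas]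
          exact measure_mono (fun x hx => hx.1.1)
  calc μ S ≤ μ (S ∩ Icc 0 R ∩ {x | f x ≤ (m₂:ℝ≥0∞)}) + μ (Ioi R) + μ {x : ℝ | (m₂:ℝ≥0∞) < f x}
      + μ (Iio 0) := le_trans (measure_mono hdecomp) (le_trans (measure_union_le _ _)
        (add_le_add (le_trans (measure_union_le _ _)
          (add_le_add (measure_union_le _ _) le_rfl)) le_rfl))
    _ ≤ (m₂:ℝ≥0∞) * volume (S ∩ Icc 0 R) + ε/2/2 + ε/2/2 + 0 :=
        add_le_add (add_le_add (add_le_add hmain hm₁') hm₂') (le_of_eq hIio)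
    _ ≤ ε/2 + ε/2/2 + ε/2/2 + 0 := by
        refine add_le_add (add_le_add (add_le_add ?_ le_rfl) le_rfl) le_rfl
        exact hN n hn
    _ = ε := by rw [add_zero, add_assoc, ENNReal.add_halves, ENNReal.add_halves]

/-- For a finite measure with no atom at `a`, the measure of shrinking intervals
around `a` tends to zero. -/
lemma aux_icc (ν : Measure ℝ) [IsFiniteMeasure ν] (a : ℝ) (hν : ν {a} = 0)
    (δ : ℕ → ℝ) (hδ : Tendsto δ atTop (𝓝 0)) :
    Tendsto (fun n => ν (Icc (a - δ n) (a + δ n))) atTop (𝓝 0) := by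
  rw [ENNReal.tendsto_atTop_zero]
  intro ε hε
  have hmono : Antitone (fun m : ℕ => Icc (a - 1/((m:ℝ)+1)) (a + 1/((m:ℝ)+1))) := by
    intro m m' hmm
    apply Icc_subset_Icc
    · have : 1/((m':ℝ)+1) ≤ 1/((m:ℝ)+1) := by
        apply one_div_le_one_div_of_le (by positivity)
        have : (m:ℝ) ≤ (m':ℝ) := by exact_mod_cast hmm
        linarith
      linarith
    · have : 1/((m':ℝ)+1) ≤ 1/((m:ℝ)+1) := by
        apply one_div_le_one_div_of_le (by positivity)
        have : (m:ℝ) ≤ (m':ℝ) := by exact_mod_cast hmm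
        linarith
      linarith
  have h := tendsto_measure_iInter_atTop (μ := ν)
    (s := fun m : ℕ => Icc (a - 1/((m:ℝ)+1)) (a + 1/((m:ℝ)+1)))
    (fun m => measurableSet_Icc.nullMeasurableSet) hmono ⟨0, measure_ne_top ν _⟩
  have hInter : ⋂ m : ℕ, Icc (a - 1/((m:ℝ)+1)) (a + 1/((m:ℝ)+1)) = {a} := by
    ext x
    simp only [mem_iInter, mem_Icc, mem_singleton_iff]
    constructor
    · intro hx
      have habs : ∀ m : ℕ, |x - a| ≤ 1/((m:ℝ)+1) := by
        intro m
        rw [abs_le]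
        constructor <;> [linarith [(hx m).1]; linarith [(hx m).2]]
      have hle : |x - a| ≤ 0 :=
        ge_of_tendsto' tendsto_one_div_add_atTop_nhds_zero_nat habs
      have : x - a = 0 := abs_eq_zero.1 (le_antisymm hle (abs_nonneg _))
      linarith
    · intro hx m
      have : (0:ℝ) < 1/((m:ℝ)+1) := by positivity
      constructor <;> [linarith [hx]; linarith [hx]]
  rw [hInter, hν] at h
  obtain ⟨m₀, hm₀⟩ := ENNReal.tendsto_atTop_zero.mp h ε hε
  have hδ' : ∀ᶠ n in atTop, |δ n| < 1/((m₀:ℝ)+1) := by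
    have := hδ.eventually (Metric.ball_mem_nhds 0 (show (0:ℝ) < 1/((m₀:ℝ)+1) by positivity))
    filter_upwards [this] with n hn
    simpa [Real.dist_eq] using hn
  obtain ⟨N, hN⟩ := hδ'.exists_forall_of_atTop
  refine ⟨N, fun n hn => ?_⟩
  refine le_trans (measure_mono ?_) (hm₀ m₀ le_rfl)
  apply Icc_subset_Icc
  · have h2 := (abs_lt.1 (hN n hn)).2
    linarith
  · have h2 := (abs_lt.1 (hN n hn)).2
    linarith

set_option maxHeartbeats 2000000 in
theorem stmt7
    {Ω' : Type*} [MeasurableSpace Ω'] (P : Measure Ω') [IsProbabilityMeasure P]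
    (ω α k : ℝ) (hω : 0 < ω) (hα : 0 ≤ α) (hk : 0 ≤ k)
    (ψ : ℝ → ℝ → ℝ)
    (hψ : ∀ x₁ x₂, ψ x₁ x₂ = ω + α * x₁ * (if k * x₂ < x₁ then 1 else 0))
    (η₁ η₂ : Ω' → ℝ) (hη₁ : Measurable η₁) (hη₂ : Measurable η₂)
    (hindep : IndepFun η₁ η₂ P)
    (f : ℝ → ℝ≥0∞) (hf : Measurable f) (hfpos : ∀ x, 0 ≤ x → 0 < f x)
    (hd₁ : Measure.map (fun z => (η₁ z) ^ 2) P = (volume.restrict (Ici (0 : ℝ))).withDensity f)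
    (hd₂ : Measure.map (fun z => (η₂ z) ^ 2) P = (volume.restrict (Ici (0 : ℝ))).withDensity f)
    (hint₁ : Integrable η₁ P) (hint₂ : Integrable η₂ P)
    (hm₁ : ∫ z, η₁ z ∂P = 0) (hm₂ : ∫ z, η₂ z ∂P = 0)
    (hv₁ : ∫ z, (η₁ z) ^ 2 ∂P = 1) (hv₂ : ∫ z, (η₂ z) ^ 2 ∂P = 1) :
    (∀ B₁ B₂ : Set ℝ, MeasurableSet B₁ → MeasurableSet B₂ → B₁ ⊆ Ici 0 → B₂ ⊆ Ici 0 →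
      ContinuousOn
        (fun y : ℝ × ℝ =>
          P {z | ψ (ω * (η₁ z) ^ 2) y.1 * (η₂ z) ^ 2 ∈ B₁ ∧
                 ω * (η₁ z) ^ 2 ∈ B₂ ∧
                 ψ ((ω + α * y.1) * (η₁ z) ^ 2) y.1 * (η₂ z) ^ 2 ∈ B₁ ∧
                 (ω + α * y.1) * (η₁ z) ^ 2 ∈ B₂})
        (Ici (0 : ℝ) ×ˢ Ici (0 : ℝ))) ∧
    (∀ B₁ B₂ : Set ℝ, MeasurableSet B₁ → MeasurableSet B₂ → B₁ ⊆ Ici 0 → B₂ ⊆ Ici 0 →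
      ∀ x₁ x₂ : ℝ, 0 ≤ x₁ → 0 ≤ x₂ →
        P {z | ψ (ω * (η₁ z) ^ 2) x₁ * (η₂ z) ^ 2 ∈ B₁ ∧
               ω * (η₁ z) ^ 2 ∈ B₂ ∧
               ψ ((ω + α * x₁) * (η₁ z) ^ 2) x₁ * (η₂ z) ^ 2 ∈ B₁ ∧
               (ω + α * x₁) * (η₁ z) ^ 2 ∈ B₂} ≤
        P {z | ψ (ψ x₁ x₂ * (η₁ z) ^ 2) x₁ * (η₂ z) ^ 2 ∈ B₁ ∧
               ψ x₁ x₂ * (η₁ z) ^ 2 ∈ B₂}) ∧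
    (∀ x₁ x₂ : ℝ, 0 ≤ x₁ → 0 ≤ x₂ →
      P {z | ψ (ω * (η₁ z) ^ 2) x₁ * (η₂ z) ^ 2 ∈ Ici (0 : ℝ) ∧
             ω * (η₁ z) ^ 2 ∈ Ici (0 : ℝ) ∧
             ψ ((ω + α * x₁) * (η₁ z) ^ 2) x₁ * (η₂ z) ^ 2 ∈ Ici (0 : ℝ) ∧
             (ω + α * x₁) * (η₁ z) ^ 2 ∈ Ici (0 : ℝ)} = 1) := by
  have hU : Measurable (fun z => (η₁ z)^2) := hη₁.pow_const 2
  have hV : Measurable (fun z => (η₂ z)^2) := hη₂.pow_const 2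
  set μ : Measure ℝ := (volume.restrict (Ici (0:ℝ))).withDensity f with hμdef
  haveI hμprob : IsProbabilityMeasure μ := by
    have h := Measure.isProbabilityMeasure_map (μ := P) hU.aemeasurable
    rwa [hd₁] at h
  have hfin : μ univ ≠ ∞ := measure_ne_top μ _
  have hμpt : ∀ a : ℝ, μ {a} = 0 := by
    intro a
    rw [hμdef, withDensity_apply f (measurableSet_singleton a)]
    apply setLIntegral_measure_zero
    rw [Measure.restrict_apply (measurableSet_singleton a)]
    exact measure_mono_null inter_subset_left Real.volume_singleton
  have hμIio : μ (Iio (0:ℝ)) = 0 := by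
    rw [hμdef, withDensity_apply f measurableSet_Iio]
    apply setLIntegral_measure_zero
    rw [Measure.restrict_apply measurableSet_Iio]
    have he : Iio (0:ℝ) ∩ Ici 0 = ∅ := by
      ext u
      simp only [mem_inter_iff, mem_Iio, mem_Ici, mem_empty_iff_false, iff_false, not_and, not_le]
      exact fun h => h
    rw [he, measure_empty]
  have hUV : Measure.map (fun z => ((η₁ z)^2, (η₂ z)^2)) P = μ.prod μ := by
    have hi : IndepFun (fun z => (η₁ z)^2) (fun z => (η₂ z)^2) P :=
      hindep.comp (measurable_id.pow_const 2) (measurable_id.pow_const 2)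
    rw [(ProbabilityTheory.indepFun_iff_map_prod_eq_prod_map_map hU.aemeasurable
      hV.aemeasurable).mp hi, hd₁, hd₂]
  refine ⟨?_, ?_, ?_⟩
  · -- (a) continuity
    intro B₁ B₂ hB₁ hB₂ _ _
    set A : ℝ → Set Ω' := fun t => {z | ψ (ω * (η₁ z) ^ 2) t * (η₂ z) ^ 2 ∈ B₁ ∧
        ω * (η₁ z) ^ 2 ∈ B₂ ∧
        ψ ((ω + α * t) * (η₁ z) ^ 2) t * (η₂ z) ^ 2 ∈ B₁ ∧
        (ω + α * t) * (η₁ z) ^ 2 ∈ B₂} with hAdef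
    suffices hone : ∀ x₀ : ℝ, 0 ≤ x₀ → ContinuousAt (fun t : ℝ => P (A t)) x₀ by
      intro y₀ hy₀
      exact ((hone y₀.1 hy₀.1).comp continuousAt_fst).continuousWithinAt
    intro x₀ hx₀
    rw [ContinuousAt, tendsto_iff_seq_tendsto]
    intro x hx
    show Tendsto (fun n => P (A (x n))) atTop (𝓝 (P (A x₀)))
    -- clamped coefficients
    set c₀ : ℝ := ω + α * x₀ with hc₀def
    have hαx₀ : 0 ≤ α * x₀ := mul_nonneg hα hx₀
    have hc₀ : 0 < c₀ := by
      rw [hc₀def]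
      linarith
    set c' : ℕ → ℝ := fun n => max (ω/2) (ω + α * x n) with hc'def
    have hc'pos : ∀ n, 0 < c' n := fun n => lt_of_lt_of_le (by linarith) (le_max_left _ _)
    have hxn : Tendsto (fun n => ω + α * x n) atTop (𝓝 c₀) := by
      rw [hc₀def]
      exact tendsto_const_nhds.add (hx.const_mul α)
    have hc'lim : Tendsto c' atTop (𝓝 c₀) := by
      have h2 := (tendsto_const_nhds (x := ω/2)).max hxn
      rwa [max_eq_right (by linarith : ω/2 ≤ c₀)] at h2
    have hc'ev : ∀ᶠ n in atTop, c' n = ω + α * x n := by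
      filter_upwards [hxn.eventually_mem (Ioi_mem_nhds (show ω/2 < c₀ by linarith))] with n hn
      rw [hc'def]
      exact max_eq_right (le_of_lt hn)
    -- the exceptional sets
    set t₀ : ℝ := k * x₀ / c₀ with ht₀def
    set E1 : ℕ → Set Ω' := fun n => (fun z => ω * (η₁ z)^2) ⁻¹'
        Icc (k*x₀ - |k * x n - k * x₀|) (k*x₀ + |k * x n - k * x₀|) with hE1def
    set E3 : ℕ → Set Ω' := fun n => (fun z => (η₁ z)^2) ⁻¹'
        Icc (t₀ - |k * x n / c' n - t₀|) (t₀ + |k * x n / c' n - t₀|) with hE3def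
    set SW : ℕ → Set (ℝ×ℝ) := fun n =>
        ((fun p : ℝ×ℝ => (ω + α * (c' n * p.1)) * p.2) ⁻¹' B₁) ∆
        ((fun p : ℝ×ℝ => (ω + α * (c₀ * p.1)) * p.2) ⁻¹' B₁) with hSWdef
    set W : ℕ → Set Ω' := fun n => (fun z => ((η₁ z)^2, (η₂ z)^2)) ⁻¹' SW n with hWdef
    set SE : ℕ → Set ℝ := fun n => ((c' n * ·) ⁻¹' B₂) ∆ ((c₀ * ·) ⁻¹' B₂) with hSEdef
    set E4 : ℕ → Set Ω' := fun n => (fun z => (η₁ z)^2) ⁻¹' SE n with hE4def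
    -- their measures tend to zero
    have hδ1 : Tendsto (fun n => |k * x n - k * x₀|) atTop (𝓝 0) := by
      have h1 := ((hx.const_mul k).sub_const (k*x₀)).abs
      simpa using h1
    have hE1tend : Tendsto (fun n => P (E1 n)) atTop (𝓝 0) := by
      set ν : Measure ℝ := Measure.map (fun z => ω * (η₁ z)^2) P with hνdef
      haveI : IsProbabilityMeasure ν := Measure.isProbabilityMeasure_map (hU.const_mul ω).aemeasurable
      have hν0 : ν {k*x₀} = 0 := by
        rw [hνdef, Measure.map_apply (hU.const_mul ω) (measurableSet_singleton _)]
        have hset : (fun z => ω * (η₁ z)^2) ⁻¹' {k*x₀} = (fun z => (η₁ z)^2) ⁻¹' {k*x₀/ω} := by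
          ext z
          simp only [mem_preimage, mem_singleton_iff]
          rw [eq_div_iff hω.ne', mul_comm]
        rw [hset, ← Measure.map_apply hU (measurableSet_singleton _), hd₁]
        exact hμpt _
      have h := aux_icc ν (k*x₀) hν0 (fun n => |k * x n - k * x₀|) hδ1
      apply Tendsto.congr _ h
      intro n
      rw [hE1def, hνdef, Measure.map_apply (hU.const_mul ω) measurableSet_Icc]
    have hδ3 : Tendsto (fun n => |k * x n / c' n - t₀|) atTop (𝓝 0) := by
      have h1 : Tendsto (fun n => k * x n / c' n) atTop (𝓝 t₀) := by
        rw [ht₀def]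
        exact (hx.const_mul k).div hc'lim hc₀.ne'
      have h2 := (h1.sub_const t₀).abs
      simpa using h2
    have hE3tend : Tendsto (fun n => P (E3 n)) atTop (𝓝 0) := by
      have h := aux_icc μ t₀ (hμpt t₀) (fun n => |k * x n / c' n - t₀|) hδ3
      apply Tendsto.congr _ h
      intro n
      rw [hE3def, ← hd₁, Measure.map_apply hU measurableSet_Icc]
    have hSWmeas : ∀ n, MeasurableSet (SW n) := by
      intro n
      rw [hSWdef]
      exact (hB₁.preimage ((((measurable_fst.const_mul (c' n)).const_mul α).const_add ω).mul
        measurable_snd)).symmDiff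
        (hB₁.preimage ((((measurable_fst.const_mul c₀).const_mul α).const_add ω).mul
        measurable_snd))
    have hWtend : Tendsto (fun n => P (W n)) atTop (𝓝 0) := by
      have hmapW : ∀ n, P (W n) = (μ.prod μ) (SW n) := by
        intro n
        rw [hWdef, ← hUV, Measure.map_apply (hU.prodMk hV) (hSWmeas n)]
      have hslice : ∀ n, (μ.prod μ) (SW n) = ∫⁻ u, μ (Prod.mk u ⁻¹' SW n) ∂μ :=
        fun n => Measure.prod_apply (hSWmeas n)
      have hmeasF : ∀ n, Measurable (fun u => μ (Prod.mk u ⁻¹' SW n)) :=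
        fun n => measurable_measure_prodMk_left (hSWmeas n)
      have hae : ∀ᵐ u ∂μ, (0:ℝ) ≤ u := by
        rw [ae_iff]
        have hs : {u : ℝ | ¬ (0:ℝ) ≤ u} = Iio 0 := by
          ext u; simp [not_le]
        rw [hs]
        exact hμIio
      have hptwise : ∀ᵐ u ∂μ, Tendsto (fun n => μ (Prod.mk u ⁻¹' SW n)) atTop
          (𝓝 ((fun _ : ℝ => (0:ℝ≥0∞)) u)) := by
        filter_upwards [hae] with u hu
        have hb₀pos : 0 < ω + α * (c₀ * u) := by
          have : 0 ≤ α * (c₀ * u) := mul_nonneg hα (mul_nonneg hc₀.le hu)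
          linarith
        have hblim : Tendsto (fun n => ω + α * (c' n * u)) atTop (𝓝 (ω + α * (c₀ * u))) :=
          tendsto_const_nhds.add ((hc'lim.mul_const u).const_mul α)
        have h := aux_L1 f hf hfin B₁ hB₁ (fun n => ω + α * (c' n * u)) (ω + α * (c₀ * u))
          hb₀pos hblim
        apply Tendsto.congr _ h
        intro n
        simp only [hSWdef, Set.preimage_symmDiff, Set.preimage_preimage, ← hμdef]
      have hdom := tendsto_lintegral_of_dominated_convergence (μ := μ)
        (bound := fun _ => (1:ℝ≥0∞)) hmeasF
        (fun n => Eventually.of_forall (fun u =>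
          le_trans (measure_mono (subset_univ _)) (le_of_eq measure_univ)))
        (by rw [lintegral_one, measure_univ]; exact ENNReal.one_ne_top) hptwise
      rw [lintegral_zero] at hdom
      apply Tendsto.congr _ hdom
      intro n
      rw [hmapW n, hslice n]
    have hSEmeas : ∀ n, MeasurableSet (SE n) := by
      intro n
      rw [hSEdef]
      exact (hB₂.preimage (measurable_const_mul (c' n))).symmDiff
        (hB₂.preimage (measurable_const_mul c₀))
    have hE4tend : Tendsto (fun n => P (E4 n)) atTop (𝓝 0) := by
      have h := aux_L1 f hf hfin B₂ hB₂ c' c₀ hc₀ hc'lim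
      apply Tendsto.congr _ h
      intro n
      rw [hE4def, ← hμdef, ← hd₁, Measure.map_apply hU (hSEmeas n), hSEdef]
    -- the symmetric difference inclusion
    have hsub : ∀ n, c' n = ω + α * x n →
        (A (x n)) ∆ (A x₀) ⊆ ((E1 n ∪ E3 n) ∪ W n) ∪ E4 n := by
      intro n hn z hz
      by_contra hznot
      simp only [mem_union, not_or] at hznot
      obtain ⟨⟨⟨h1, h3⟩, hW4⟩, h4⟩ := hznot
      have hu0 : (0:ℝ) ≤ (η₁ z)^2 := sq_nonneg _
      have hcn : 0 < ω + α * x n := hn ▸ hc'pos n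
      -- condition 1
      have hiff1 : ψ (ω * (η₁ z)^2) (x n) = ψ (ω * (η₁ z)^2) x₀ := by
        rw [hψ, hψ]
        have hind : (k * x n < ω * (η₁ z)^2) ↔ (k * x₀ < ω * (η₁ z)^2) := by
          constructor
          · intro hlt
            by_contra hge
            push_neg at hge
            refine h1 ?_
            rw [hE1def]
            simp only [mem_preimage, mem_Icc]
            have hna := neg_abs_le (k * x n - k * x₀)
            have hab := abs_nonneg (k * x n - k * x₀)
            constructor <;> linarith
          · intro hlt
            by_contra hge
            push_neg at hge
            refine h1 ?_
            rw [hE1def]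
            simp only [mem_preimage, mem_Icc]
            have hla := le_abs_self (k * x n - k * x₀)
            have hab := abs_nonneg (k * x n - k * x₀)
            constructor <;> linarith
        simp only [hind]
      -- condition 3 indicator
      have hiff3ind : (k * x n < (ω + α * x n) * (η₁ z)^2) ↔ (k * x₀ < c₀ * (η₁ z)^2) := by
        have e1 : (k * x n < (ω + α * x n) * (η₁ z)^2) ↔ (k * x n / c' n < (η₁ z)^2) := by
          rw [div_lt_iff₀ (hc'pos n), hn, mul_comm ((η₁ z)^2) (ω + α * x n)]
        have e2 : (k * x₀ < c₀ * (η₁ z)^2) ↔ (t₀ < (η₁ z)^2) := by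
          rw [ht₀def, div_lt_iff₀ hc₀, mul_comm ((η₁ z)^2) c₀]
        rw [e1, e2]
        constructor
        · intro hlt
          by_contra hge
          push_neg at hge
          refine h3 ?_
          rw [hE3def]
          simp only [mem_preimage, mem_Icc]
          have hna := neg_abs_le (k * x n / c' n - t₀)
          have hab := abs_nonneg (k * x n / c' n - t₀)
          constructor <;> linarith
        · intro hlt
          by_contra hge
          push_neg at hge
          refine h3 ?_
          rw [hE3def]
          simp only [mem_preimage, mem_Icc]
          have hla := le_abs_self (k * x n / c' n - t₀)
          have hab := abs_nonneg (k * x n / c' n - t₀)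
          constructor <;> linarith
      -- condition 3
      have hiff3 : (ψ ((ω + α * x n) * (η₁ z)^2) (x n) * (η₂ z)^2 ∈ B₁) ↔
          (ψ ((ω + α * x₀) * (η₁ z)^2) x₀ * (η₂ z)^2 ∈ B₁) := by
        rw [hψ, hψ]
        by_cases hind : k * x₀ < c₀ * (η₁ z)^2
        · have hindn : k * x n < (ω + α * x n) * (η₁ z)^2 := hiff3ind.mpr hind
          have hind0 : k * x₀ < (ω + α * x₀) * (η₁ z)^2 := by rw [← hc₀def]; exact hind
          rw [if_pos hindn, if_pos hind0]
          simp only [mul_one]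
          have hWiff : ((ω + α * (c' n * (η₁ z)^2)) * (η₂ z)^2 ∈ B₁) ↔
              ((ω + α * (c₀ * (η₁ z)^2)) * (η₂ z)^2 ∈ B₁) := by
            by_contra hne
            apply hW4
            rw [hWdef]
            simp only [mem_preimage]
            rw [hSWdef]
            simp only [Set.mem_symmDiff, mem_preimage]
            tauto
          rw [hn, hc₀def] at hWiff
          have hre : ∀ c : ℝ, α * (c * (η₁ z)^2) = α * c * (η₁ z)^2 := fun c => by ring
          rw [hre, hre] at hWiff
          convert hWiff using 3 <;> ring
        · have hind0 : ¬ (k * x₀ < (ω + α * x₀) * (η₁ z)^2) := by rw [← hc₀def]; exact hind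
          have hindn : ¬ (k * x n < (ω + α * x n) * (η₁ z)^2) := fun hc => hind (hiff3ind.mp hc)
          rw [if_neg hindn, if_neg hind0]
          simp only [mul_zero, add_zero]
      -- condition 4
      have hiff4 : ((ω + α * x n) * (η₁ z)^2 ∈ B₂) ↔ ((ω + α * x₀) * (η₁ z)^2 ∈ B₂) := by
        by_contra hne
        apply h4
        rw [hE4def]
        simp only [mem_preimage]
        rw [hSEdef]
        simp only [Set.mem_symmDiff, mem_preimage]
        rw [hn, hc₀def]
        tauto
      rw [Set.mem_symmDiff] at hz
      have hiffA : z ∈ A (x n) ↔ z ∈ A x₀ := by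
        rw [hAdef]
        simp only [mem_setOf_eq]
        rw [hiff1]
        exact and_congr Iff.rfl (and_congr Iff.rfl (and_congr hiff3 hiff4))
      rcases hz with ⟨ha, hb⟩ | ⟨ha, hb⟩
      · exact hb (hiffA.mp ha)
      · exact hb (hiffA.mpr ha)
    -- symmetric difference measure tends to zero
    have hkey : Tendsto (fun n => P ((A (x n)) ∆ (A x₀))) atTop (𝓝 0) := by
      apply tendsto_of_tendsto_of_tendsto_of_le_of_le' (g := fun _ => (0:ℝ≥0∞))
        (h := fun n => ((P (E1 n) + P (E3 n)) + P (W n)) + P (E4 n)) tendsto_const_nhds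
      · have h := ((hE1tend.add hE3tend).add hWtend).add hE4tend
        simpa using h
      · exact Eventually.of_forall (fun n => zero_le)
      · filter_upwards [hc'ev] with n hn
        refine le_trans (measure_mono (hsub n hn)) ?_
        refine le_trans (measure_union_le _ _) (add_le_add ?_ le_rfl)
        refine le_trans (measure_union_le _ _) (add_le_add ?_ le_rfl)
        exact measure_union_le _ _
    -- squeeze
    have hup : ∀ n, P (A (x n)) ≤ P (A x₀) + P ((A (x n)) ∆ (A x₀)) := by
      intro n
      refine le_trans (measure_mono ?_) (measure_union_le _ _)
      intro z hz
      by_cases h : z ∈ A x₀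
      · exact Or.inl h
      · exact Or.inr (Set.mem_symmDiff.mpr (Or.inl ⟨hz, h⟩))
    have hlo : ∀ n, P (A x₀) ≤ P (A (x n)) + P ((A (x n)) ∆ (A x₀)) := by
      intro n
      refine le_trans (measure_mono ?_) (measure_union_le _ _)
      intro z hz
      by_cases h : z ∈ A (x n)
      · exact Or.inl h
      · exact Or.inr (Set.mem_symmDiff.mpr (Or.inr ⟨hz, h⟩))
    have hlower : Tendsto (fun n => P (A x₀) - P ((A (x n)) ∆ (A x₀))) atTop (𝓝 (P (A x₀))) := by
      have h := ENNReal.Tendsto.sub (tendsto_const_nhds (x := P (A x₀))) hkey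
        (Or.inl (measure_ne_top P _))
      simpa using h
    have hupper : Tendsto (fun n => P (A x₀) + P ((A (x n)) ∆ (A x₀))) atTop (𝓝 (P (A x₀))) := by
      have h := (tendsto_const_nhds (x := P (A x₀))).add hkey
      simpa using h
    exact tendsto_of_tendsto_of_tendsto_of_le_of_le hlower hupper
      (fun n => tsub_le_iff_right.mpr (hlo n)) hup
  · -- (b) domination
    intro B₁ B₂ _ _ _ _ x₁ x₂ hx₁ hx₂
    by_cases h : k * x₂ < x₁
    · have hval : ψ x₁ x₂ = ω + α * x₁ := by rw [hψ x₁ x₂, if_pos h, mul_one]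
      rw [hval]
      exact measure_mono (fun z hz => ⟨hz.2.2.1, hz.2.2.2⟩)
    · have hval : ψ x₁ x₂ = ω := by rw [hψ x₁ x₂, if_neg h, mul_zero, add_zero]
      rw [hval]
      exact measure_mono (fun z hz => ⟨hz.1, hz.2.1⟩)
  · -- (c) mass one
    intro x₁ x₂ hx₁ hx₂
    have huniv : {z | ψ (ω * (η₁ z) ^ 2) x₁ * (η₂ z) ^ 2 ∈ Ici (0 : ℝ) ∧
        ω * (η₁ z) ^ 2 ∈ Ici (0 : ℝ) ∧
        ψ ((ω + α * x₁) * (η₁ z) ^ 2) x₁ * (η₂ z) ^ 2 ∈ Ici (0 : ℝ) ∧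
        (ω + α * x₁) * (η₁ z) ^ 2 ∈ Ici (0 : ℝ)} = univ := by
      apply eq_univ_of_forall
      intro z
      simp only [mem_setOf_eq, mem_Ici]
      have hu := sq_nonneg (η₁ z)
      have hv := sq_nonneg (η₂ z)
      have hψnn : ∀ y : ℝ, 0 ≤ y → ∀ t : ℝ, 0 ≤ ψ y t := by
        intro y hy t
        rw [hψ]
        split_ifs <;> nlinarith [mul_nonneg hα hy]
      have hn1 : (0:ℝ) ≤ ω * (η₁ z)^2 := mul_nonneg hω.le hu
      have hn2 : (0:ℝ) ≤ (ω + α * x₁) * (η₁ z)^2 :=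
        mul_nonneg (by nlinarith [mul_nonneg hα hx₁]) hu
      exact ⟨mul_nonneg (hψnn _ hn1 _) hv, hn1, mul_nonneg (hψnn _ hn2 _) hv, hn2⟩
    rw [huniv, measure_univ]
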